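/- Let R be a GWNC ring in which 2 is a unit and every unit u ∈ R satisfies u² = 1. Then R is a commutative ring. -/
import Mathlib


def IsWeaklyNilCleanElem {R : Type*} [Ring R] (a : R) : Prop :=
  ∃ e q : R, IsIdempotentElem e ∧ IsNilpotent q ∧ (a = q + e ∨ a = q - e)

def IsGWNCRing (R : Type*) [Ring R] : Prop :=
  ∀ a : R, ¬IsUnit a → IsWeaklyNilCleanElem a

theorem commutative_of_isGWNC_two_unit_units_sq_one {R : Type*} [Ring R]
    (h : IsGWNCRing R) (h2 : IsUnit (2 : R)) (hu : ∀ u : R, IsUnit u → u ^ 2 = 1) :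
    ∀ x y : R, x * y = y * x := by
  -- all nilpotents are zero
  have nilzero : ∀ q : R, IsNilpotent q → q = 0 := by
    intro q hq
    have hu1 : IsUnit (1 + q) := by
      simpa [add_comm] using hq.isUnit_add_one
    have hu2 : IsUnit (1 - q) := by
      simpa [sub_eq_add_neg, add_comm] using hq.neg.isUnit_add_one
    have e1 : (1 + q) ^ 2 = 1 := hu (1 + q) hu1
    have e2 : (1 - q) ^ 2 = 1 := hu (1 - q) hu2
    have e1' : 2 * q + q * q = 0 := by
      have hexp : (1 + q) ^ 2 = 1 + (2 * q + q * q) := by noncomm_ring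
      have := hexp.symm.trans e1
      simpa using this
    have e2' : -(2 * q) + q * q = 0 := by
      have hexp : (1 - q) ^ 2 = 1 + (-(2 * q) + q * q) := by noncomm_ring
      have := hexp.symm.trans e2
      simpa using this
    have h4 : (2 : R) * (2 * q) = 0 := by
      have : (2 : R) * (2 * q) = (2 * q + q * q) - (-(2 * q) + q * q) := by noncomm_ring
      rw [this, e1', e2', sub_zero]
    have hq1 : 2 * q = 0 := h2.mul_left_cancel (by simpa using h4)
    exact h2.mul_left_cancel (by simpa using hq1)
  -- idempotents are central
  have idemcentral : ∀ e : R, IsIdempotentElem e → ∀ x : R, e * x = x * e := by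
    intro e he x
    have he1 : (1 - e) * e = 0 := by
      rw [sub_mul, one_mul, he.eq, sub_self]
    have he2 : e * (1 - e) = 0 := by
      rw [mul_sub, mul_one, he.eq, sub_self]
    have h1 : e * x * (1 - e) = 0 := by
      apply nilzero
      refine ⟨2, ?_⟩
      calc (e * x * (1 - e)) ^ 2 = e * x * ((1 - e) * e) * (x * (1 - e)) := by
            noncomm_ring
        _ = 0 := by rw [he1, mul_zero, zero_mul]
    have h1' : (1 - e) * (x * e) = 0 := by
      apply nilzero
      refine ⟨2, ?_⟩
      calc ((1 - e) * (x * e)) ^ 2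
          = (1 - e) * x * (e * (1 - e)) * (x * e) := by noncomm_ring
        _ = 0 := by rw [he2, mul_zero, zero_mul]
    have hx1 : e * x = e * x * e := by
      have heq : e * x - e * x * e = 0 := by
        calc e * x - e * x * e = e * x * (1 - e) := by noncomm_ring
          _ = 0 := h1
      exact (sub_eq_zero.mp heq)
    have hx2 : x * e = e * (x * e) := by
      have heq : x * e - e * (x * e) = 0 := by
        calc x * e - e * (x * e) = (1 - e) * (x * e) := by noncomm_ring
          _ = 0 := h1'
      exact (sub_eq_zero.mp heq)
    rw [hx1, hx2, mul_assoc]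
  -- nonunits are central
  have nonunit_central : ∀ a : R, ¬IsUnit a → ∀ x : R, a * x = x * a := by
    intro a ha x
    obtain ⟨e, q, he, hq, hc⟩ := h a ha
    have hq0 : q = 0 := nilzero q hq
    have hec := idemcentral e he x
    rcases hc with rfl | rfl <;> subst hq0 <;>
      simp only [zero_add, zero_sub, neg_mul, mul_neg, hec]
  -- main
  intro x y
  by_cases hx : IsUnit x
  · by_cases hy : IsUnit y
    · have hx2 : x * x = 1 := by have := hu x hx; rwa [sq] at this
      have hy2 : y * y = 1 := by have := hu y hy; rwa [sq] at this
      have hxy2 : (x * y) * (x * y) = 1 := by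
        have := hu (x * y) (hx.mul hy); rwa [sq] at this
      calc x * y = x * ((x * y) * (x * y)) * y := by rw [hxy2]; noncomm_ring
        _ = (x * x) * (y * x) * (y * y) := by noncomm_ring
        _ = y * x := by rw [hx2, hy2, one_mul, mul_one]
    · exact (nonunit_central y hy x).symm
  · exact nonunit_central x hx y
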